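/- The function Î is well defined: if U₁, U₂ are unitaries with U₁ ρ_x U₁* = U₂ ρ_x U₂* (equivalently, if U = U₂⁻¹U₁ commutes with ρ_x), then ∑_{j=1}^d (x_j − x_{j+1}) ln pm_j(U₁*ρU₁) = ∑_{j=1}^d (x_j − x_{j+1}) ln pm_j(U₂*ρU₂) for every positive definite density matrix ρ. -/

import Mathlib

open Matrix ComplexOrder Finset

/-- The upper-left `k × k` principal minor of a `d × d` matrix (for `k ≤ d`;
defined via `min k d` so that no side condition is needed). -/
def pm {d : ℕ} (k : ℕ) (A : Matrix (Fin d) (Fin d) ℂ) : ℂ :=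
  (A.submatrix (fun i : Fin (min k d) => Fin.castLE (min_le_right k d) i)
    (fun i : Fin (min k d) => Fin.castLE (min_le_right k d) i)).det

/-- well-definedness of `Î`: if `x` is a decreasingly ordered probability
vector (with `x d = 0` as the convention `x_{d+1} = 0`), `ρ` a positive definite density
matrix, and `U₁, U₂` unitaries with `U₁ ρ_x U₁ᴴ = U₂ ρ_x U₂ᴴ`, then
`∑_j (x_j − x_{j+1}) ln pm_j(U₁ᴴ ρ U₁) = ∑_j (x_j − x_{j+1}) ln pm_j(U₂ᴴ ρ U₂)`. -/
lemma pm_unitary_block {d k : ℕ} (A U : Matrix (Fin d) (Fin d) ℂ)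
    (hUU : Uᴴ * U = 1)
    (hblock : ∀ a b : Fin d, ¬ ((a : ℕ) < k ↔ (b : ℕ) < k) → U a b = 0) :
    pm k (Uᴴ * A * U) = pm k A := by
  set m := min k d with hm
  set e : Fin m → Fin d := fun i => Fin.castLE (min_le_right k d) i with he
  have hinj : Function.Injective e := fun a b hab => Fin.castLE_injective _ hab
  have hval : ∀ i : Fin m, ((e i : Fin d) : ℕ) = (i : ℕ) := fun i => rfl
  set E : Matrix (Fin d) (Fin m) ℂ := fun a i => if a = e i then 1 else 0 with hEdef
  have hE : ∀ M : Matrix (Fin d) (Fin d) ℂ, Eᴴ * M * E = M.submatrix e e := by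
    intro M
    ext i j
    simp only [Matrix.mul_apply, Matrix.conjTranspose_apply]
    simp [hEdef, Matrix.conjTranspose_apply, Finset.sum_ite_eq,
      Finset.sum_ite_eq', apply_ite, ite_mul, mul_ite]
  have hEE : Eᴴ * E = (1 : Matrix (Fin m) (Fin m) ℂ) := by
    ext i j
    simp only [Matrix.mul_apply, Matrix.conjTranspose_apply]
    simp only [hEdef]
    rcases eq_or_ne i j with rfl | hij
    · simp [Finset.sum_ite_eq']
    · have hne : e j ≠ e i := fun h => hij (hinj h.symm)
      have hz : ∀ a : Fin d,
          (star (if a = e i then (1:ℂ) else 0)) * (if a = e j then 1 else 0) = 0 := by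
        intro a
        rcases eq_or_ne a (e i) with rfl | hai
        · simp [hne.symm]
        · simp [hai]
      rw [Finset.sum_congr rfl (fun a _ => hz a)]
      simp [Matrix.one_apply, hij]
  set P : Matrix (Fin m) (Fin m) ℂ := U.submatrix e e with hPdef
  have hUE : U * E = E * P := by
    ext a i
    have lhs : (U * E) a i = U a (e i) := by
      simp only [Matrix.mul_apply]
      simp [hEdef, Finset.sum_ite_eq', mul_ite]
    rw [lhs]
    by_cases ha : (a : ℕ) < m
    · have hae : a = e ⟨(a : ℕ), ha⟩ := Fin.ext rfl
      have hiff : ∀ jj : Fin m, (a = e jj) ↔ ((⟨(a : ℕ), ha⟩ : Fin m) = jj) :=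
        fun jj => ⟨fun h => hinj (hae.symm.trans h), fun h => h ▸ hae⟩
      symm
      simp only [Matrix.mul_apply, hEdef, hPdef, Matrix.submatrix_apply]
      calc ∑ jj : Fin m, (if a = e jj then (1:ℂ) else 0) * U (e jj) (e i)
          = ∑ jj : Fin m, (if (⟨(a : ℕ), ha⟩ : Fin m) = jj then (1:ℂ) else 0) * U (e jj) (e i) :=
            Finset.sum_congr rfl (fun jj _ => by simp only [hiff jj])
        _ = U (e ⟨(a : ℕ), ha⟩) (e i) := by simp [Finset.sum_ite_eq, ite_mul]
        _ = U a (e i) := by rw [← hae]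
    · have hzero : U a (e i) = 0 := by
        apply hblock
        intro hiffk
        have hik : ((e i : Fin d) : ℕ) < k := lt_of_lt_of_le i.isLt (min_le_left k d)
        exact ha (lt_min (hiffk.mpr hik) a.isLt)
      have hz : ∀ jj : Fin m, (if a = e jj then (1:ℂ) else 0) * P jj i = 0 := by
        intro jj
        have hane : a ≠ e jj := by
          intro h
          have h1 : (a : ℕ) = ((e jj : Fin d) : ℕ) := congrArg Fin.val h
          have h2 := jj.isLt
          rw [hval jj] at h1
          omega
        simp [hane]
      simp only [Matrix.mul_apply]
      rw [Finset.sum_congr rfl (fun jj _ => hz jj), Finset.sum_const_zero, hzero]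
  have hPP : Pᴴ * P = 1 := by
    have h1 : (E * P)ᴴ * (E * P) = Pᴴ * P := by
      rw [Matrix.conjTranspose_mul, Matrix.mul_assoc, ← Matrix.mul_assoc Eᴴ E P, hEE,
        Matrix.one_mul]
    have h2 : (U * E)ᴴ * (U * E) = 1 := by
      rw [Matrix.conjTranspose_mul, Matrix.mul_assoc, ← Matrix.mul_assoc Uᴴ U E, hUU,
        Matrix.one_mul, hEE]
    rw [← h1, ← hUE, h2]
  have key : (Uᴴ * A * U).submatrix e e = Pᴴ * A.submatrix e e * P := by
    have h3 : Eᴴ * (Uᴴ * A * U) * E = (U * E)ᴴ * A * (U * E) := by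
      rw [Matrix.conjTranspose_mul]
      simp only [Matrix.mul_assoc]
    rw [← hE, h3, hUE, Matrix.conjTranspose_mul, ← hE A]
    simp only [Matrix.mul_assoc]
  have hdet1 : Pᴴ.det * P.det = 1 := by
    rw [← Matrix.det_mul, hPP, Matrix.det_one]
  unfold pm
  rw [key, Matrix.det_mul, Matrix.det_mul]
  calc Pᴴ.det * (A.submatrix e e).det * P.det
      = Pᴴ.det * P.det * (A.submatrix e e).det := by ring
    _ = (A.submatrix e e).det := by rw [hdet1, one_mul]

theorem rate_function_well_defined
    {d : ℕ} (ρ : Matrix (Fin d) (Fin d) ℂ)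
    (hρ : ρ.PosDef) (hρtr : ρ.trace = 1)
    (x : ℕ → ℝ) (hxmono : ∀ i j, i ≤ j → j < d → x j ≤ x i)
    (hxnn : ∀ j, j < d → 0 ≤ x j) (hxd : x d = 0)
    (hxsum : ∑ j ∈ range d, x j = 1)
    (U₁ U₂ : Matrix (Fin d) (Fin d) ℂ)
    (hU₁ : U₁ ∈ Matrix.unitaryGroup (Fin d) ℂ) (hU₂ : U₂ ∈ Matrix.unitaryGroup (Fin d) ℂ)
    (hsame : U₁ * Matrix.diagonal (fun i : Fin d => (x i.1 : ℂ)) * U₁ᴴ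
           = U₂ * Matrix.diagonal (fun i : Fin d => (x i.1 : ℂ)) * U₂ᴴ) :
    ∑ j ∈ range d, (x j - x (j + 1)) * Real.log ((pm (j + 1) (U₁ᴴ * ρ * U₁)).re)
      = ∑ j ∈ range d, (x j - x (j + 1)) * Real.log ((pm (j + 1) (U₂ᴴ * ρ * U₂)).re) := by
  -- basic unitary facts
  have h1 : U₁ᴴ * U₁ = 1 := by
    have := hU₁.1
    rwa [Matrix.star_eq_conjTranspose] at this
  have h1' : U₁ * U₁ᴴ = 1 := by
    have := hU₁.2
    rwa [Matrix.star_eq_conjTranspose] at this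
  have h2 : U₂ᴴ * U₂ = 1 := by
    have := hU₂.1
    rwa [Matrix.star_eq_conjTranspose] at this
  have h2' : U₂ * U₂ᴴ = 1 := by
    have := hU₂.2
    rwa [Matrix.star_eq_conjTranspose] at this
  set D : Matrix (Fin d) (Fin d) ℂ := Matrix.diagonal (fun i : Fin d => (x i.1 : ℂ)) with hD
  set U : Matrix (Fin d) (Fin d) ℂ := U₂ᴴ * U₁ with hU
  have hUUstar : Uᴴ * U = 1 := by
    rw [hU, Matrix.conjTranspose_mul, Matrix.conjTranspose_conjTranspose,
      Matrix.mul_assoc, ← Matrix.mul_assoc U₂ U₂ᴴ U₁, h2', Matrix.one_mul, h1]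
  have hU2U : U₂ * U = U₁ := by
    rw [hU, ← Matrix.mul_assoc, h2', Matrix.one_mul]
  have hconj : U₁ᴴ * ρ * U₁ = Uᴴ * (U₂ᴴ * ρ * U₂) * U := by
    rw [← hU2U, Matrix.conjTranspose_mul]
    simp only [Matrix.mul_assoc]
  have hcomm : U * D = D * U := by
    have hc := congrArg (fun M => U₂ᴴ * M * U₁) hsame
    simp only [Matrix.mul_assoc] at hc
    rw [show U₁ᴴ * U₁ = 1 from h1] at hc
    rw [Matrix.mul_one] at hc
    rw [← Matrix.mul_assoc U₂ᴴ U₂ _, h2, Matrix.one_mul] at hc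
    rw [hU]
    simp only [Matrix.mul_assoc]
    exact hc
  have hentry : ∀ a b : Fin d, (x (b : ℕ) : ℂ) ≠ (x (a : ℕ) : ℂ) → U a b = 0 := by
    intro a b hne
    have := congrFun (congrFun hcomm a) b
    rw [hD, Matrix.mul_diagonal, Matrix.diagonal_mul] at this
    have h0 : U a b * ((x (b : ℕ) : ℂ) - (x (a : ℕ) : ℂ)) = 0 := by
      rw [mul_sub, this]; ring
    rcases mul_eq_zero.mp h0 with h | h
    · exact h
    · exact absurd (sub_eq_zero.mp h) hne
  refine Finset.sum_congr rfl (fun j hj => ?_)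
  have hjd : j < d := Finset.mem_range.mp hj
  by_cases hc : x j - x (j + 1) = 0
  · rw [hc]; ring
  · have hlt : x (j + 1) < x j := by
      rcases lt_or_eq_of_le (Nat.succ_le_of_lt hjd) with h | h
      · exact lt_of_le_of_ne (hxmono j (j + 1) (Nat.le_succ j) h) (fun he => hc (by linarith))
      · have : x (j + 1) = 0 := by rw [show j + 1 = d from h, hxd]
        rcases lt_or_eq_of_le (hxnn j hjd) with h' | h'
        · rw [this]; exact h'
        · exact absurd (by linarith : x j - x (j+1) = 0) hc
    have hblock : ∀ a b : Fin d, ¬ ((a : ℕ) < j + 1 ↔ (b : ℕ) < j + 1) → U a b = 0 := by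
      intro a b hab
      apply hentry
      intro hxe
      have hxe' : x (b : ℕ) = x (a : ℕ) := by exact_mod_cast hxe
      by_cases ha : (a : ℕ) < j + 1 <;> by_cases hb : (b : ℕ) < j + 1
      · exact absurd (iff_of_true ha hb) hab
      · have hxa : x j ≤ x (a : ℕ) := hxmono (a : ℕ) j (Nat.lt_succ_iff.mp ha) hjd
        have hxb : x (b : ℕ) ≤ x (j + 1) := hxmono (j + 1) (b : ℕ) (not_lt.mp hb) b.isLt
        linarith
      · have hxa : x (a : ℕ) ≤ x (j + 1) := hxmono (j + 1) (a : ℕ) (not_lt.mp ha) a.isLt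
        have hxb : x j ≤ x (b : ℕ) := hxmono (b : ℕ) j (Nat.lt_succ_iff.mp hb) hjd
        linarith
      · exact absurd (iff_of_false ha hb) hab
    have hpm : pm (j + 1) (U₁ᴴ * ρ * U₁) = pm (j + 1) (U₂ᴴ * ρ * U₂) := by
      rw [hconj]
      exact pm_unitary_block (U₂ᴴ * ρ * U₂) U hUUstar hblock
    rw [hpm]
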